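/- Let F be a finite simple graph on n ≥ 3 vertices that is not bipartite, with adjacency matrix A_F. Let G_F be the graph on two disjoint copies of V(F) in which a vertex u in one copy is adjacent to a vertex v in the other copy if and only if u and v are adjacent in F (the bipartite double cover of F, whose adjacency matrix is the block matrix [[0, A_F],[A_F, 0]]), and let H_F be the disjoint union of two copies of F. Then G_F and H_F are singularly cospectral but not cospectral. -/

import Mathlib

open Matrix Polynomial

/-- The real adjacency matrix of a finite simple graph. -/
noncomputable def SimpleGraph.adjMat {V : Type*} [Fintype V] (G : SimpleGraph V) :
    Matrix V V ℝ :=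
  letI := Classical.decRel G.Adj
  G.adjMatrix ℝ

/-- The multiset of eigenvalues of the adjacency matrix, counted with multiplicity
(the roots of the characteristic polynomial). -/
noncomputable def SimpleGraph.eigMultiset {V : Type*} [Fintype V] [DecidableEq V]
    (G : SimpleGraph V) : Multiset ℝ :=
  G.adjMat.charpoly.roots

/-- The multiset of nonzero singular values of a graph, counted with multiplicity:
the nonzero absolute values of the eigenvalues of its adjacency matrix. -/
noncomputable def SimpleGraph.nzSingVals {V : Type*} [Fintype V] [DecidableEq V]
    (G : SimpleGraph V) : Multiset ℝ :=
  (G.eigMultiset.map (fun x => |x|)).filter (fun x => x ≠ 0)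

/-- Two graphs are singularly cospectral if their multisets of nonzero singular
values (with multiplicities) coincide. -/
def SingularlyCospectral {V W : Type*} [Fintype V] [DecidableEq V] [Fintype W] [DecidableEq W]
    (G : SimpleGraph V) (H : SimpleGraph W) : Prop :=
  G.nzSingVals = H.nzSingVals

/-- The bipartite double cover of a graph `F`: the graph on two disjoint copies of the
vertex set of `F` in which a vertex `u` of one copy is adjacent to a vertex `v` of the
other copy if and only if `u` and `v` are adjacent in `F`. -/
def SimpleGraph.doubleCover {V : Type*} (F : SimpleGraph V) : SimpleGraph (V ⊕ V) where
  Adj x y := ∃ a b, F.Adj a b ∧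
    ((x = Sum.inl a ∧ y = Sum.inr b) ∨ (x = Sum.inr a ∧ y = Sum.inl b))
  symm := by
    constructor
    rintro x y ⟨a, b, hab, (⟨hx, hy⟩ | ⟨hx, hy⟩)⟩
    · exact ⟨b, a, hab.symm, Or.inr ⟨hy, hx⟩⟩
    · exact ⟨b, a, hab.symm, Or.inl ⟨hy, hx⟩⟩
  loopless := by
    constructor
    rintro x ⟨a, b, hab, (⟨hx, hy⟩ | ⟨hx, hy⟩)⟩ <;> subst hx <;> simp_all

section Aux

variable {n : Type*} [Fintype n] [DecidableEq n]

/-- Similar matrices (via an invertible conjugating matrix) have the same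
characteristic polynomial. -/
lemma aux_charpoly_eq_of_conj {M N P : Matrix n n ℝ} (hP : P.det ≠ 0) (h : P * M = N * P) :
    M.charpoly = N.charpoly := by
  have key : P.map (C : ℝ →+* ℝ[X]) * charmatrix M = charmatrix N * P.map (C : ℝ →+* ℝ[X]) := by
    rw [charmatrix, charmatrix, mul_sub, sub_mul]
    congr 1
    · exact (Matrix.scalar_commute (X : ℝ[X]) (fun r => Commute.all _ _) _).symm
    · simp only [RingHom.mapMatrix_apply, ← Matrix.map_mul, h]
  have hdet := congrArg Matrix.det key
  rw [det_mul, det_mul, ← Matrix.charpoly, ← Matrix.charpoly, mul_comm] at hdet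
  have hPd : (P.map (C : ℝ →+* ℝ[X])).det ≠ 0 := by
    rw [← RingHom.mapMatrix_apply, ← RingHom.map_det]
    simpa using hP
  exact mul_right_cancel₀ hPd hdet

lemma aux_charpoly_diagonal (d : n → ℝ) :
    (Matrix.diagonal d).charpoly = ∏ i, (X - C (d i)) := by
  have h : charmatrix (Matrix.diagonal d) = Matrix.diagonal fun i => X - C (d i) := by
    ext i j
    by_cases hij : i = j
    · subst hij; simp [charmatrix_apply_eq]
    · simp [charmatrix_apply_ne _ _ _ hij, Matrix.diagonal_apply_ne _ hij]
  rw [Matrix.charpoly, h, det_diagonal]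

lemma aux_pow_of_spectral {U D A : Matrix n n ℝ} (h1 : star U * U = 1) (h2 : U * star U = 1)
    (hs : A = U * D * star U) (m : ℕ) : A ^ m = U * D ^ m * star U := by
  subst hs
  induction m with
  | zero => simpa using h2.symm
  | succ k ih =>
    rw [pow_succ, ih, pow_succ]
    simp only [mul_assoc]
    rw [← mul_assoc (star U) U, h1, one_mul]

lemma aux_charpoly_hermitian (A : Matrix n n ℝ) (hA : A.IsHermitian) :
    A.charpoly = ∏ i, (X - C (hA.eigenvalues i)) := by
  set U := (hA.eigenvectorUnitary : Matrix n n ℝ) with hU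
  have h1 : star U * U = 1 := Matrix.mem_unitaryGroup_iff'.mp hA.eigenvectorUnitary.2
  have hs : A = U * Matrix.diagonal hA.eigenvalues * star U := by
    have := hA.spectral_theorem
    simpa using this
  have hconj : star U * A = Matrix.diagonal hA.eigenvalues * star U := by
    conv_lhs => rw [hs]
    rw [← mul_assoc, ← mul_assoc, h1, one_mul]
  have hdet : (star U).det ≠ 0 := by
    intro h0
    have := congrArg Matrix.det h1
    rw [det_mul, h0, zero_mul, det_one] at this
    exact zero_ne_one this
  rw [aux_charpoly_eq_of_conj hdet hconj, aux_charpoly_diagonal]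

lemma aux_charpoly_neg_hermitian (A : Matrix n n ℝ) (hA : A.IsHermitian) :
    (-A).charpoly = ∏ i, (X - C (-(hA.eigenvalues i))) := by
  set U := (hA.eigenvectorUnitary : Matrix n n ℝ) with hU
  have h1 : star U * U = 1 := Matrix.mem_unitaryGroup_iff'.mp hA.eigenvectorUnitary.2
  have hs : A = U * Matrix.diagonal hA.eigenvalues * star U := by
    have := hA.spectral_theorem
    simpa using this
  have hs' : -A = U * Matrix.diagonal (fun i => -(hA.eigenvalues i)) * star U := by
    rw [← Matrix.diagonal_neg, mul_neg, neg_mul, ← hs]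
  have hconj : star U * (-A) = Matrix.diagonal (fun i => -(hA.eigenvalues i)) * star U := by
    conv_lhs => rw [hs']
    rw [← mul_assoc, ← mul_assoc, h1, one_mul]
  have hdet : (star U).det ≠ 0 := by
    intro h0
    have := congrArg Matrix.det h1
    rw [det_mul, h0, zero_mul, det_one] at this
    exact zero_ne_one this
  rw [aux_charpoly_eq_of_conj hdet hconj, aux_charpoly_diagonal]

lemma aux_trace_pow (A : Matrix n n ℝ) (hA : A.IsHermitian) (m : ℕ) :
    (A ^ m).trace = ∑ i, hA.eigenvalues i ^ m := by
  set U := (hA.eigenvectorUnitary : Matrix n n ℝ) with hU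
  have h1 : star U * U = 1 := Matrix.mem_unitaryGroup_iff'.mp hA.eigenvectorUnitary.2
  have h2 : U * star U = 1 := Matrix.mem_unitaryGroup_iff.mp hA.eigenvectorUnitary.2
  have hs : A = U * Matrix.diagonal hA.eigenvalues * star U := by
    have := hA.spectral_theorem
    simpa using this
  rw [aux_pow_of_spectral h1 h2 hs m, Matrix.trace_mul_comm, ← mul_assoc, h1, one_mul,
    Matrix.diagonal_pow, Matrix.trace_diagonal]
  simp [Pi.pow_apply]

lemma aux_charpoly_offdiag (A : Matrix n n ℝ) :
    (Matrix.fromBlocks 0 A A 0).charpoly = A.charpoly * (-A).charpoly := by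
  have h : (Matrix.fromBlocks (1 : Matrix n n ℝ) 1 1 (-1)) * Matrix.fromBlocks 0 A A 0 =
      (Matrix.fromBlocks A 0 0 (-A)) * Matrix.fromBlocks 1 1 1 (-1) := by
    simp [Matrix.fromBlocks_multiply]
  have hdet : ((Matrix.fromBlocks 1 1 1 (-1)) : Matrix (n ⊕ n) (n ⊕ n) ℝ).det ≠ 0 := by
    rw [Matrix.det_fromBlocks_one₁₁]
    have h2 : (-1 : Matrix n n ℝ) - 1 * 1 = (-2 : ℝ) • (1 : Matrix n n ℝ) := by
      ext i j
      simp [Matrix.one_apply]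
      split <;> norm_num
    rw [h2, Matrix.det_smul, det_one, mul_one]
    exact pow_ne_zero _ (by norm_num)
  rw [aux_charpoly_eq_of_conj hdet h, Matrix.charpoly_fromBlocks_zero₁₂]

end Aux

section GraphAux

variable {V : Type*} [Fintype V] [DecidableEq V]

lemma aux_adjMat_eq (F : SimpleGraph V) [DecidableRel F.Adj] : F.adjMat = F.adjMatrix ℝ := by
  ext i j
  unfold SimpleGraph.adjMat
  by_cases h : F.Adj i j <;> simp [SimpleGraph.adjMatrix_apply, h]

lemma aux_doubleCover_adj_iff (F : SimpleGraph V) (a b : V) :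
    (F.doubleCover.Adj (Sum.inl a) (Sum.inr b) ↔ F.Adj a b)
    ∧ (F.doubleCover.Adj (Sum.inr a) (Sum.inl b) ↔ F.Adj a b)
    ∧ ¬ F.doubleCover.Adj (Sum.inl a) (Sum.inl b)
    ∧ ¬ F.doubleCover.Adj (Sum.inr a) (Sum.inr b) := by
  refine ⟨⟨?_, fun h => ⟨a, b, h, Or.inl ⟨rfl, rfl⟩⟩⟩,
    ⟨?_, fun h => ⟨a, b, h, Or.inr ⟨rfl, rfl⟩⟩⟩, ?_, ?_⟩ <;>
    rintro ⟨x, y, hxy, (⟨hx, hy⟩ | ⟨hx, hy⟩)⟩ <;> simp_all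

lemma aux_adjMat_doubleCover (F : SimpleGraph V) :
    F.doubleCover.adjMat = Matrix.fromBlocks 0 F.adjMat F.adjMat 0 := by
  classical
  rw [aux_adjMat_eq, aux_adjMat_eq]
  ext x y
  cases x <;> cases y <;>
    simp_all [SimpleGraph.adjMatrix_apply, Matrix.fromBlocks, aux_doubleCover_adj_iff]

lemma aux_adjMat_sum (F : SimpleGraph V) :
    (F ⊕g F).adjMat = Matrix.fromBlocks F.adjMat 0 0 F.adjMat := by
  classical
  rw [aux_adjMat_eq, aux_adjMat_eq]
  ext x y
  cases x <;> cases y <;>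
    simp_all [SimpleGraph.adjMatrix_apply, Matrix.fromBlocks]

lemma aux_adjMat_isHermitian (F : SimpleGraph V) : F.adjMat.IsHermitian := by
  classical
  rw [aux_adjMat_eq]
  ext i j
  simp [Matrix.conjTranspose_apply, SimpleGraph.adjMatrix_apply, F.adj_comm i j]

lemma aux_exists_odd_closed_walk (F : SimpleGraph V) (h : ¬ F.Colorable 2) :
    ∃ (v : V) (p : F.Walk v v), Odd p.length := by
  by_contra hodd
  push_neg at hodd
  simp only [Nat.not_odd_iff_even] at hodd
  apply h
  have hre : ∀ v : V, F.Reachable ((F.connectedComponentMk v).out) v := by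
    intro v
    rw [← SimpleGraph.ConnectedComponent.eq]
    change _ = F.connectedComponentMk v
    exact Quot.out_eq _
  let w : ∀ v : V, F.Walk ((F.connectedComponentMk v).out) v := fun v => (hre v).some
  have key : ∀ u v : V, F.Adj u v → ¬ ((w u).length : ZMod 2) = ((w v).length : ZMod 2) := by
    intro u v huv heq
    have hcomp : (F.connectedComponentMk u) = (F.connectedComponentMk v) :=
      SimpleGraph.ConnectedComponent.connectedComponentMk_eq_of_adj huv
    have hout : (F.connectedComponentMk v).out = (F.connectedComponentMk u).out := by rw [hcomp]
    let p : F.Walk ((F.connectedComponentMk u).out) ((F.connectedComponentMk u).out) :=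
      ((w u).append (SimpleGraph.Walk.cons huv ((w v).reverse.copy rfl hout)))
    have hlen : p.length = (w u).length + ((w v).length + 1) := by
      simp [p, SimpleGraph.Walk.length_append, SimpleGraph.Walk.length_cons]
    have heven := hodd _ p
    rw [hlen] at heven
    rw [ZMod.natCast_eq_natCast_iff] at heq
    have heq2 : (w u).length % 2 = (w v).length % 2 := heq
    rw [Nat.even_iff] at heven
    omega
  have hcol : F.Colorable (Fintype.card (ZMod 2)) :=
    (SimpleGraph.Coloring.mk (fun v => ((w v).length : ZMod 2))
      (fun {a b} hab => key a b hab)).colorable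
  simpa using hcol

end GraphAux

/-- Let `F` be a non-bipartite graph on `n ≥ 3` vertices.  Then the bipartite double
cover `G_F` of `F` and the disjoint union `H_F = 2F` of two copies of `F` are
singularly cospectral but not cospectral. -/
theorem doubleCover_singularlyCospectral_not_cospectral_two_copies
    {V : Type*} [Fintype V] [DecidableEq V] (F : SimpleGraph V)
    (hcard : 3 ≤ Fintype.card V) (hnotbip : ¬ F.Colorable 2) :
    SingularlyCospectral F.doubleCover (F ⊕g F) ∧
    F.doubleCover.eigMultiset ≠ (F ⊕g F).eigMultiset := by
  classical
  set A := F.adjMat with hAdef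
  have hH : A.IsHermitian := aux_adjMat_isHermitian F
  obtain ⟨μ, hμ⟩ : ∃ μ : Multiset ℝ, μ = Finset.univ.val.map hH.eigenvalues := ⟨_, rfl⟩
  have hAne : A.charpoly ≠ 0 := (Matrix.charpoly_monic A).ne_zero
  have hnegne : (-A).charpoly ≠ 0 := (Matrix.charpoly_monic (-A)).ne_zero
  have hμprod : A.charpoly = (μ.map (fun a => X - C a)).prod := by
    rw [aux_charpoly_hermitian A hH, Finset.prod_eq_multiset_prod, hμ, Multiset.map_map]
    rfl
  have hnegprod : (-A).charpoly = ((μ.map Neg.neg).map (fun a => X - C a)).prod := by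
    rw [aux_charpoly_neg_hermitian A hH, Finset.prod_eq_multiset_prod, hμ, Multiset.map_map,
      Multiset.map_map]
    rfl
  have hrootsA : A.charpoly.roots = μ := by
    rw [hμprod, roots_multiset_prod_X_sub_C]
  have hrootsneg : (-A).charpoly.roots = μ.map Neg.neg := by
    rw [hnegprod, roots_multiset_prod_X_sub_C]
  have hroots_dc : F.doubleCover.eigMultiset = μ + μ.map Neg.neg := by
    rw [SimpleGraph.eigMultiset, aux_adjMat_doubleCover, ← hAdef, aux_charpoly_offdiag,
      roots_mul (mul_ne_zero hAne hnegne), hrootsA, hrootsneg]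
  have hroots_sum : (F ⊕g F).eigMultiset = μ + μ := by
    rw [SimpleGraph.eigMultiset, aux_adjMat_sum, ← hAdef, Matrix.charpoly_fromBlocks_zero₁₂,
      roots_mul (mul_ne_zero hAne hAne), hrootsA]
  constructor
  · unfold SingularlyCospectral SimpleGraph.nzSingVals
    rw [hroots_dc, hroots_sum]
    congr 1
    rw [Multiset.map_add, Multiset.map_add, Multiset.map_map]
    congr 1
    apply Multiset.map_congr rfl
    intro x _
    simp [abs_neg]
  · intro heq
    rw [hroots_dc, hroots_sum] at heq
    have hν : μ.map Neg.neg = μ := add_left_cancel heq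
    obtain ⟨v, p, hoddp⟩ := aux_exists_odd_closed_walk F hnotbip
    set m := p.length with hm
    have htr : (A ^ m).trace = ∑ i, hH.eigenvalues i ^ m := aux_trace_pow A hH m
    have hsum0 : ∑ i, hH.eigenvalues i ^ m = 0 := by
      have h1 : (μ.map (fun x => x ^ m)).sum = ∑ i, hH.eigenvalues i ^ m := by
        rw [Finset.sum_eq_multiset_sum, hμ, Multiset.map_map]
        rfl
      have h2 : μ.map (fun x => x ^ m) = (μ.map (fun x => x ^ m)).map Neg.neg := by
        conv_lhs => rw [← hν]
        rw [Multiset.map_map, Multiset.map_map]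
        apply Multiset.map_congr rfl
        intro x _
        simp only [Function.comp_apply, hoddp.neg_pow]
      have h3 := congrArg Multiset.sum h2
      rw [Multiset.sum_map_neg'] at h3
      have : (μ.map (fun x => x ^ m)).sum = 0 := by linarith
      rw [← h1, this]
    have hpos : 0 < (A ^ m).trace := by
      rw [Matrix.trace]
      rw [hAdef, aux_adjMat_eq F]
      apply Finset.sum_pos'
      · intro i _
        rw [Matrix.diag_apply, SimpleGraph.adjMatrix_pow_apply_eq_card_walk]
        positivity
      · refine ⟨v, Finset.mem_univ v, ?_⟩
        rw [Matrix.diag_apply, SimpleGraph.adjMatrix_pow_apply_eq_card_walk]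
        have hne : Nonempty {q : F.Walk v v | q.length = m} := ⟨⟨p, rfl⟩⟩
        have := Fintype.card_pos_iff.mpr hne
        exact_mod_cast this
    rw [htr, hsum0] at hpos
    exact lt_irrefl 0 hpos
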